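/- Let R be a commutative ring with ideals J and 𝔞, and set I = J + 𝔞. If J ∩ 𝔞^t ⊆ J·𝔞^{t-1} for every t ≥ 1, then J ∩ I^t = J·I^{t-1} for every t ≥ 1; equivalently, the natural surjection 𝒜_{R↠R/J}(I/J) ↠ Rees_{R/J}(I/J) from the Aluffi algebra onto the Rees algebra of I/J over R/J is an isomorphism. -/

import Mathlib

private lemma pow_sup_le {R : Type*} [CommRing R] (J a : Ideal R) :
    ∀ s : ℕ, (J ⊔ a) ^ (s + 1) ≤ J * (J ⊔ a) ^ s ⊔ a ^ (s + 1) := by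
  intro s
  induction s with
  | zero => simp [Ideal.sup_mul]
  | succ s ih =>
    calc (J ⊔ a) ^ (s + 2) = (J ⊔ a) ^ (s + 1) * J ⊔ (J ⊔ a) ^ (s + 1) * a := by
          rw [← Ideal.mul_sup, pow_succ]
      _ ≤ J * (J ⊔ a) ^ (s + 1) ⊔ (J * (J ⊔ a) ^ s ⊔ a ^ (s + 1)) * a := by
          exact sup_le_sup (le_of_eq (mul_comm _ _)) (Ideal.mul_mono_left ih)
      _ ≤ J * (J ⊔ a) ^ (s + 1) ⊔ a ^ (s + 2) := by
          rw [Ideal.sup_mul]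
          refine sup_le le_sup_left (sup_le (le_sup_of_le_left ?_) (le_sup_of_le_right ?_))
          · rw [mul_assoc]
            calc J * ((J ⊔ a) ^ s * a) ≤ J * ((J ⊔ a) ^ s * (J ⊔ a)) :=
                  Ideal.mul_mono_right (Ideal.mul_mono_right le_sup_right)
              _ = J * (J ⊔ a) ^ (s + 1) := by rw [← pow_succ]
          · rw [← pow_succ]

/-- let `J` and `𝔞` be ideals of a commutative ring `R` and `I = J + 𝔞`.
If `J ∩ 𝔞^t ⊆ J·𝔞^{t-1}` for every `t ≥ 1`, then `J ∩ I^t = J·I^{t-1}` for every `t ≥ 1`;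
that is, the natural surjection `𝒜_{R↠R/J}(I/J) ↠ Rees_{R/J}(I/J)` is an
isomorphism (its kernel `⊕_{t≥2}(J ∩ I^t)/(J·I^{t-1})` vanishes). -/
theorem aluffi_to_rees_iso_of_residual_generators
    {R : Type*} [CommRing R] (J a : Ideal R)
    (h : ∀ t : ℕ, 1 ≤ t → J ⊓ a ^ t ≤ J * a ^ (t - 1)) :
    ∀ t : ℕ, 1 ≤ t → J ⊓ (J ⊔ a) ^ t = J * (J ⊔ a) ^ (t - 1) := by
  rintro (_ | s) ht
  · omega
  simp only [Nat.add_sub_cancel]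
  apply le_antisymm
  · calc J ⊓ (J ⊔ a) ^ (s + 1) ≤ J ⊓ (J * (J ⊔ a) ^ s ⊔ a ^ (s + 1)) := by
          exact inf_le_inf_left _ (pow_sup_le J a s)
      _ = J * (J ⊔ a) ^ s ⊔ J ⊓ a ^ (s + 1) := by
          rw [inf_comm, sup_inf_assoc_of_le _ Ideal.mul_le_left, inf_comm]
      _ ≤ J * (J ⊔ a) ^ s ⊔ J * a ^ s := by
          have := h (s + 1) (by omega)
          simpa using sup_le_sup_left this _
      _ ≤ J * (J ⊔ a) ^ s := by
          apply sup_le le_rfl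
          gcongr
          exact le_sup_right
  · exact le_inf Ideal.mul_le_left (by rw [pow_succ, mul_comm]; gcongr; exact le_sup_left)
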